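/- Let d ≥ 2 and let T be an infinite d-ary rooted tree which is not complete, say with |L_m| < d^m vertices at some level m ≥ 1, where L_m is the set of level-m vertices of T. Then dim_upper(Aut(T)) ≤ |L_m|/d^m < 1; in particular, the upper Minkowski dimension of Aut(T) is strictly less than 1. -/

import Mathlib

open scoped Classical

noncomputable section

/-! ### Minkowski dimension machinery for groups of automorphisms of rooted trees

A rooted tree is presented by its levels `V 0, V 1, V 2, …` (with `V 0` the root level)
together with parent maps `V (n+1) → V n`.  An automorphism is a family of permutations
of the levels commuting with the parent maps; it is in particular determined by a point of
`∀ k, Equiv.Perm (V k)`.  The restriction `r_n σ` of `σ` to the height-`n` subtree is the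
tuple `(σ 0, …, σ n)`, and the natural metric is
`d(σ,τ) = inf { d!^{-(dⁿ-1)/(d-1)} : r_n σ = r_n τ }`. -/

/-- The exponent `(dⁿ - 1)/(d - 1) = 1 + d + ⋯ + d^(n-1)`. -/
def scaleExp (d n : ℕ) : ℕ := ∑ i ∈ Finset.range n, d ^ i

/-- The scale `ε_n = d!^{-(dⁿ-1)/(d-1)}`, i.e. `1/|Aut(Tₙᶜᵒᵐ)|`. -/
def treeScale (d n : ℕ) : ℝ := ((d.factorial : ℝ) ^ scaleExp d n)⁻¹

/-- Two families of level permutations restrict to the same automorphism of the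
height-`n` subtree. -/
def AgreeUpTo {V : ℕ → Type*} (n : ℕ) (σ τ : ∀ k, Equiv.Perm (V k)) : Prop :=
  ∀ k, k ≤ n → σ k = τ k

/-- The natural metric on automorphisms of a rooted `d`-ary tree:
`d(σ,τ) = inf { d!^{-(dⁿ-1)/(d-1)} : σ and τ agree on the height-n subtree }`. -/
def treeDist {V : ℕ → Type*} (d : ℕ) (σ τ : ∀ k, Equiv.Perm (V k)) : ℝ :=
  sInf {x : ℝ | ∃ n : ℕ, AgreeUpTo n σ τ ∧ x = treeScale d n}

/-- `N_{ε_n}(G)`: the least number of balls of radius `ε_n = treeScale d n` needed to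
cover `G`. -/
def coverNum {V : ℕ → Type*} (d : ℕ) (G : Set (∀ k, Equiv.Perm (V k))) (n : ℕ) : ℕ :=
  sInf {m : ℕ | ∃ s : Finset (∀ k, Equiv.Perm (V k)), s.card = m ∧
    G ⊆ ⋃ σ ∈ s, {τ | treeDist d σ τ ≤ treeScale d n}}

/-- The lower Minkowski dimension `liminf_{ε → 0} log N_ε(G) / log (1/ε)` (computed
along the scales `ε_n` of the metric). -/
def dimLower {V : ℕ → Type*} (d : ℕ) (G : Set (∀ k, Equiv.Perm (V k))) : ℝ :=
  Filter.liminf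
    (fun n : ℕ => Real.log (coverNum d G n : ℝ) / Real.log (1 / treeScale d n)) Filter.atTop

/-- The upper Minkowski dimension `limsup_{ε → 0} log N_ε(G) / log (1/ε)` (computed
along the scales `ε_n` of the metric). -/
def dimUpper {V : ℕ → Type*} (d : ℕ) (G : Set (∀ k, Equiv.Perm (V k))) : ℝ :=
  Filter.limsup
    (fun n : ℕ => Real.log (coverNum d G n : ℝ) / Real.log (1 / treeScale d n)) Filter.atTop

/-- The Minkowski dimension of `G` exists and equals `x`. -/
def HasDim {V : ℕ → Type*} (d : ℕ) (G : Set (∀ k, Equiv.Perm (V k))) (x : ℝ) : Prop :=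
  dimLower d G = x ∧ dimUpper d G = x

/-- `G` is closed for the natural metric. -/
def IsDistClosed {V : ℕ → Type*} (d : ℕ) (G : Set (∀ k, Equiv.Perm (V k))) : Prop :=
  ∀ σ, (∀ ε : ℝ, 0 < ε → ∃ τ ∈ G, treeDist d σ τ ≤ ε) → σ ∈ G

/-- The closure of `G` for the natural metric. -/
def distClosure {V : ℕ → Type*} (d : ℕ) (G : Set (∀ k, Equiv.Perm (V k))) :
    Set (∀ k, Equiv.Perm (V k)) :=
  {σ | ∀ ε : ℝ, 0 < ε → ∃ τ ∈ G, treeDist d σ τ ≤ ε}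

/-- `|r_n(G)|`: the cardinality of the restriction of `G` to the height-`n` subtree. -/
def levelCard {V : ℕ → Type*} (G : Set (∀ k, Equiv.Perm (V k))) (n : ℕ) : ℕ :=
  Nat.card ((fun (σ : ∀ k, Equiv.Perm (V k)) (k : Fin (n + 1)) => σ k.1) '' G)

end
noncomputable section

/-- An infinite `d`-ary rooted tree, presented by its levels: `V n` is the set of
level-`n` vertices, `parent` maps a vertex to its parent, there is a unique root,
and every vertex has at least `1` and at most `d` children. -/
structure DaryTree (d : ℕ) where
  V : ℕ → Type
  parent : ∀ n, V (n + 1) → V n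
  root_card : Nat.card (V 0) = 1
  child_lb : ∀ n (v : V n), 1 ≤ Nat.card {w : V (n + 1) // parent n w = v}
  child_ub : ∀ n (v : V n), Nat.card {w : V (n + 1) // parent n w = v} ≤ d

/-- The group of automorphisms of a rooted tree presented by levels and parent maps:
families of level permutations fixing the root level structure and commuting with
the parent maps. -/
def autGroup {V : ℕ → Type*} (parent : ∀ n, V (n + 1) → V n) :
    Subgroup (∀ n, Equiv.Perm (V n)) where
  carrier := {σ | ∀ n (v : V (n + 1)), parent n (σ (n + 1) v) = σ n (parent n v)}
  one_mem' := by intro n v; rfl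
  mul_mem' := by
    intro a b ha hb n v
    simp only [Pi.mul_apply, Equiv.Perm.mul_apply]
    rw [ha, hb]
  inv_mem' := by
    intro a ha n v
    simp only [Pi.inv_apply]
    have h := ha n ((a (n + 1))⁻¹ v)
    rw [Equiv.Perm.coe_inv, Equiv.apply_symm_apply] at h
    rw [h]; exact ((a n).symm_apply_apply (parent n ((a (n + 1)).symm v))).symm

/-- The automorphism group `Aut(T)` of an infinite `d`-ary rooted tree. -/
def DaryTree.aut {d : ℕ} (T : DaryTree d) : Subgroup (∀ n, Equiv.Perm (T.V n)) :=
  autGroup T.parent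

/-- A `d`-ary rooted tree is complete if every vertex has exactly `d` children. -/
def DaryTree.IsComplete {d : ℕ} (T : DaryTree d) : Prop :=
  ∀ n (v : T.V n), Nat.card {w : T.V (n + 1) // T.parent n w = v} = d

end

noncomputable section AuxProof

open Filter

namespace ArborealAux

variable {d : ℕ} (T : DaryTree d)

lemma Vfinite : ∀ n, Finite (T.V n) := by
  intro n
  induction n with
  | zero => exact Nat.finite_of_card_ne_zero (by rw [T.root_card]; omega)
  | succ n ih =>
    haveI := ih
    haveI : ∀ v : T.V n, Finite {w : T.V (n+1) // T.parent n w = v} := fun v =>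
      Nat.finite_of_card_ne_zero (by have := T.child_lb n v; omega)
    exact Finite.of_equiv _ (Equiv.sigmaFiberEquiv (T.parent n))

lemma Vnonempty : ∀ n, Nonempty (T.V n) := by
  intro n
  induction n with
  | zero =>
    exact (Nat.card_ne_zero.mp (by rw [T.root_card]; omega)).1
  | succ n ih =>
    obtain ⟨v⟩ := ih
    have : Nonempty {w : T.V (n+1) // T.parent n w = v} :=
      (Nat.card_ne_zero.mp (by have := T.child_lb n v; omega)).1
    obtain ⟨w, _⟩ := this
    exact ⟨w⟩

lemma cardV_pos (n : ℕ) : 0 < Nat.card (T.V n) := by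
  haveI := Vfinite T n
  haveI := Vnonempty T n
  exact Nat.card_pos

lemma cardV_succ_le (n : ℕ) : Nat.card (T.V (n+1)) ≤ d * Nat.card (T.V n) := by
  haveI := Vfinite T
  letI : Fintype (T.V n) := Fintype.ofFinite _
  letI : Fintype (T.V (n+1)) := Fintype.ofFinite _
  letI : ∀ v : T.V n, Fintype {w : T.V (n+1) // T.parent n w = v} := fun v => Fintype.ofFinite _
  calc Nat.card (T.V (n+1))
      = Nat.card (Σ v : T.V n, {w : T.V (n+1) // T.parent n w = v}) :=
        (Nat.card_congr (Equiv.sigmaFiberEquiv (T.parent n))).symm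
    _ = ∑ v : T.V n, Fintype.card {w : T.V (n+1) // T.parent n w = v} := by
        rw [Nat.card_eq_fintype_card, Fintype.card_sigma]
    _ ≤ ∑ _v : T.V n, d := Finset.sum_le_sum
        (fun v _ => by rw [← Nat.card_eq_fintype_card]; exact T.child_ub n v)
    _ = Fintype.card (T.V n) * d := by rw [Finset.sum_const, Finset.card_univ, smul_eq_mul]
    _ = d * Nat.card (T.V n) := by rw [Nat.card_eq_fintype_card, mul_comm]

lemma cardV_le_pow (m k : ℕ) : Nat.card (T.V (m + k)) ≤ Nat.card (T.V m) * d ^ k := by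
  induction k with
  | zero => simp
  | succ k ih =>
    calc Nat.card (T.V (m + k + 1)) ≤ d * Nat.card (T.V (m + k)) := cardV_succ_le T _
      _ ≤ d * (Nat.card (T.V m) * d ^ k) := Nat.mul_le_mul_left d ih
      _ = Nat.card (T.V m) * d ^ (k + 1) := by ring

lemma treeScale_pos (d n : ℕ) : 0 < treeScale d n := by
  have h : (0:ℝ) < (d.factorial : ℝ) := by exact_mod_cast d.factorial_pos
  unfold treeScale
  positivity

lemma treeDist_le_of_agree {V : ℕ → Type*} (d : ℕ) {σ τ : ∀ k, Equiv.Perm (V k)} {n : ℕ}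
    (h : AgreeUpTo n σ τ) : treeDist d σ τ ≤ treeScale d n := by
  apply csInf_le
  · refine ⟨0, ?_⟩
    rintro x ⟨k, -, rfl⟩
    exact (treeScale_pos d k).le
  · exact ⟨n, h, rfl⟩

lemma log_one_div_treeScale (d n : ℕ) :
    Real.log (1 / treeScale d n) = (scaleExp d n : ℝ) * Real.log (d.factorial : ℝ) := by
  rw [treeScale, one_div, inv_inv, Real.log_pow]

/-- Covering number is at most the number of restrictions. -/
lemma coverNum_le_levelCard {V : ℕ → Type*} [∀ k, Finite (V k)] (d n : ℕ)
    (G : Set (∀ k, Equiv.Perm (V k))) :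
    coverNum d G n ≤ Nat.card ((fun (σ : ∀ k, Equiv.Perm (V k)) (k : Fin (n + 1)) => σ k.1) '' G) := by
  classical
  set r : (∀ k, Equiv.Perm (V k)) → ∀ k : Fin (n + 1), Equiv.Perm (V k.1) :=
    fun σ k => σ k.1 with hr
  have hfin : (r '' G).Finite := Set.toFinite _
  have pickmem : ∀ t : hfin.toFinset, t.1 ∈ r '' G := fun t => hfin.mem_toFinset.mp t.2
  let pick : hfin.toFinset → (∀ k, Equiv.Perm (V k)) := fun t => (pickmem t).choose
  have pick_spec : ∀ t, pick t ∈ G ∧ r (pick t) = t.1 := fun t => (pickmem t).choose_spec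
  set s : Finset (∀ k, Equiv.Perm (V k)) := hfin.toFinset.attach.image pick with hs
  have hcov : G ⊆ ⋃ σ ∈ s, {τ | treeDist d σ τ ≤ treeScale d n} := by
    intro τ hτ
    have htmem : r τ ∈ hfin.toFinset := hfin.mem_toFinset.mpr ⟨τ, hτ, rfl⟩
    set t : hfin.toFinset := ⟨r τ, htmem⟩
    refine Set.mem_iUnion₂.mpr ⟨pick t, Finset.mem_image.mpr ⟨t, Finset.mem_attach _ _, rfl⟩, ?_⟩
    refine treeDist_le_of_agree d (fun k hk => ?_)
    have := congrFun (pick_spec t).2 ⟨k, Nat.lt_succ_of_le hk⟩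
    exact this
  have h1 : coverNum d G n ≤ s.card := Nat.sInf_le ⟨s, rfl, hcov⟩
  refine h1.trans ?_
  calc s.card ≤ hfin.toFinset.attach.card := Finset.card_image_le
    _ = hfin.toFinset.card := Finset.card_attach
    _ = Nat.card (r '' G) := by
        rw [Nat.card_coe_set_eq, Set.ncard_eq_toFinset_card _ hfin]

/-- The number of restrictions of `Aut T` to levels `0..n` is at most
`d!^(|V 0| + ⋯ + |V (n-1)|)`. -/
lemma card_restr_le (n : ℕ) :
    Nat.card ((fun (σ : ∀ k, Equiv.Perm (T.V k)) (k : Fin (n + 1)) => σ k.1) ''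
        (T.aut : Set (∀ k, Equiv.Perm (T.V k)))) ≤
      d.factorial ^ (∑ k ∈ Finset.range n, Nat.card (T.V k)) := by
  classical
  haveI := Vfinite T
  induction n with
  | zero =>
    have hsub : Subsingleton (T.V 0) := (Nat.card_eq_one_iff_unique.mp T.root_card).1
    haveI : ∀ k : Fin 1, Subsingleton (Equiv.Perm (T.V k.1)) := by
      intro k
      have hk : k.1 = 0 := by omega
      rw [hk]
      infer_instance
    haveI : Subsingleton (∀ k : Fin 1, Equiv.Perm (T.V k.1)) := inferInstance
    simp only [Finset.range_zero, Finset.sum_empty, pow_zero]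
    haveI hsubset : Subsingleton ↥((fun (σ : ∀ k, Equiv.Perm (T.V k)) (k : Fin 1) => σ k.1) ''
        (T.aut : Set (∀ k, Equiv.Perm (T.V k)))) := inferInstance
    rcases isEmpty_or_nonempty ↥((fun (σ : ∀ k, Equiv.Perm (T.V k)) (k : Fin 1) => σ k.1) ''
        (T.aut : Set (∀ k, Equiv.Perm (T.V k)))) with he | hne
    · rw [Nat.card_of_isEmpty]
      omega
    · obtain ⟨a⟩ := hne
      rw [Nat.card_of_subsingleton a]
  | succ n ih =>
    set G : Set (∀ k, Equiv.Perm (T.V k)) := (T.aut : Set (∀ k, Equiv.Perm (T.V k))) with hG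
    set rn : (∀ k, Equiv.Perm (T.V k)) → ∀ k : Fin (n + 1), Equiv.Perm (T.V k.1) :=
      fun σ k => σ k.1 with hrn
    set rsucc : (∀ k, Equiv.Perm (T.V k)) → ∀ k : Fin (n + 2), Equiv.Perm (T.V k.1) :=
      fun σ k => σ k.1 with hrsucc
    set FP := {π : Equiv.Perm (T.V (n+1)) // ∀ w, T.parent n (π w) = T.parent n w} with hFPdef
    -- Claim A : card FP ≤ d!^(card V n)
    have hFP : Nat.card FP ≤ d.factorial ^ Nat.card (T.V n) := by
      letI : Fintype (T.V n) := Fintype.ofFinite _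
      letI : ∀ v : T.V n, Fintype {w : T.V (n+1) // T.parent n w = v} := fun v =>
        Fintype.ofFinite _
      set j : FP → ∀ v : T.V n, Equiv.Perm {w : T.V (n+1) // T.parent n w = v} :=
        fun π v => π.1.subtypePerm (fun w => by rw [π.2 w]) with hj
      have hinj : Function.Injective j := by
        intro π π' h
        apply Subtype.ext
        apply Equiv.ext
        intro w
        have h1 := congrFun h (T.parent n w)
        have h2 := Equiv.ext_iff.mp h1 ⟨w, rfl⟩
        exact Subtype.ext_iff.mp h2
      calc Nat.card FP ≤ Nat.card (∀ v : T.V n, Equiv.Perm {w : T.V (n+1) // T.parent n w = v}) :=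
            Nat.card_le_card_of_injective j hinj
        _ = ∏ v : T.V n, Nat.card (Equiv.Perm {w : T.V (n+1) // T.parent n w = v}) := Nat.card_pi
        _ ≤ ∏ _v : T.V n, d.factorial := by
            refine Finset.prod_le_prod' (fun v _ => ?_)
            rw [Nat.card_eq_fintype_card, Fintype.card_perm]
            exact Nat.factorial_le (by rw [← Nat.card_eq_fintype_card]; exact T.child_ub n v)
        _ = d.factorial ^ Fintype.card (T.V n) := by
            rw [Finset.prod_const, Finset.card_univ]
        _ = d.factorial ^ Nat.card (T.V n) := by rw [Nat.card_eq_fintype_card]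
    -- Claim B : card (rsucc '' G) ≤ card (rn '' G) * card FP
    have hstep : Nat.card (rsucc '' G) ≤ Nat.card (rn '' G) * Nat.card FP := by
      have hlast : (n + 1 : ℕ) < n + 2 := by omega
      -- truncation
      have trunc_mem : ∀ x : rsucc '' G, (fun k : Fin (n+1) => x.1 ⟨k.1, by omega⟩) ∈ rn '' G := by
        rintro ⟨x, σ, hσG, hσx⟩
        exact ⟨σ, hσG, funext (fun k => congrFun hσx ⟨k.1, by omega⟩)⟩
      let tr : rsucc '' G → rn '' G := fun x => ⟨_, trunc_mem x⟩
      -- representative of a truncated restriction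
      let rep : rn '' G → (∀ k, Equiv.Perm (T.V k)) := fun t => t.2.choose
      have rep_spec : ∀ t : rn '' G, rep t ∈ G ∧ rn (rep t) = t.1 := fun t => t.2.choose_spec
      -- the permutation component
      have hpi : ∀ x : rsucc '' G,
          ∀ w, T.parent n ((((rep (tr x)) (n+1))⁻¹ * x.1 ⟨n+1, hlast⟩) w) = T.parent n w := by
        rintro ⟨x, hx⟩ w
        obtain ⟨σ, hσG, hσx⟩ := hx
        set t : rn '' G := tr ⟨x, ⟨σ, hσG, hσx⟩⟩ with ht
        have hrepG : rep t ∈ G := (rep_spec t).1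
        have hrepn : (rep t) n = σ n := by
          have := congrFun (rep_spec t).2 ⟨n, by omega⟩
          simp only [rn] at this
          rw [this]
          exact (congrFun hσx ⟨n, by omega⟩).symm
        have hxlast : x ⟨n+1, hlast⟩ = σ (n+1) := (congrFun hσx ⟨n+1, hlast⟩).symm
        have haut1 : ∀ v, T.parent n (σ (n+1) v) = σ n (T.parent n v) := hσG n
        have haut2 : ∀ v, T.parent n ((rep t) (n+1) v) = (rep t) n (T.parent n v) := hrepG n
        have hinv : ∀ z, T.parent n (((rep t) (n+1))⁻¹ z) = ((rep t) n)⁻¹ (T.parent n z) := by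
          intro z
          have := haut2 (((rep t) (n+1))⁻¹ z)
          simp only [Equiv.Perm.coe_inv, Equiv.apply_symm_apply] at this
          rw [this]
          simp only [Equiv.Perm.coe_inv, Equiv.symm_apply_apply]
        simp only [Equiv.Perm.mul_apply, hxlast]
        rw [hinv, haut1, hrepn]
        simp only [Equiv.Perm.coe_inv, Equiv.symm_apply_apply]
      let Φ : rsucc '' G → (rn '' G) × FP :=
        fun x => (tr x, ⟨(((rep (tr x)) (n+1))⁻¹ * x.1 ⟨n+1, hlast⟩), hpi x⟩)
      have hΦinj : Function.Injective Φ := by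
        intro x y h
        have h1 : tr x = tr y := congrArg Prod.fst h
        have h2 : (((rep (tr x)) (n+1))⁻¹ * x.1 ⟨n+1, hlast⟩)
            = (((rep (tr y)) (n+1))⁻¹ * y.1 ⟨n+1, hlast⟩) :=
          Subtype.ext_iff.mp (congrArg Prod.snd h)
        rw [h1] at h2
        have hlast_eq : x.1 ⟨n+1, hlast⟩ = y.1 ⟨n+1, hlast⟩ := mul_left_cancel h2
        apply Subtype.ext
        funext k
        rcases Nat.lt_or_ge k.1 (n+1) with hk | hk
        · have := congrFun (Subtype.ext_iff.mp h1) ⟨k.1, hk⟩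
          simpa using this
        · have hk1 : k = ⟨n+1, hlast⟩ := by
            apply Fin.ext
            simp only []
            omega
          rw [hk1]
          exact hlast_eq
      haveI : Finite (∀ k : Fin (n + 1), Equiv.Perm (T.V k.1)) := inferInstance
      haveI : Finite (rn '' G) := Subtype.finite
      haveI : Finite FP := Subtype.finite
      calc Nat.card (rsucc '' G) ≤ Nat.card ((rn '' G) × FP) :=
            Nat.card_le_card_of_injective Φ hΦinj
        _ = Nat.card (rn '' G) * Nat.card FP := Nat.card_prod _ _
    calc Nat.card (rsucc '' G) ≤ Nat.card (rn '' G) * Nat.card FP := hstep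
      _ ≤ d.factorial ^ (∑ k ∈ Finset.range n, Nat.card (T.V k)) *
            (d.factorial ^ Nat.card (T.V n)) := Nat.mul_le_mul ih hFP
      _ = d.factorial ^ (∑ k ∈ Finset.range (n+1), Nat.card (T.V k)) := by
          rw [Finset.sum_range_succ, pow_add]

lemma one_le_scaleExp (d : ℕ) {n : ℕ} (hd : 1 ≤ d) (hn : 1 ≤ n) : 1 ≤ scaleExp d n := by
  have h0 : (0 : ℕ) ∈ Finset.range n := Finset.mem_range.mpr (by omega)
  calc 1 = d ^ 0 := (pow_zero d).symm
    _ ≤ ∑ i ∈ Finset.range n, d ^ i := Finset.single_le_sum (fun i _ => Nat.zero_le _) h0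

lemma n_le_scaleExp (d : ℕ) (hd : 1 ≤ d) (n : ℕ) : n ≤ scaleExp d n := by
  calc n = ∑ _i ∈ Finset.range n, 1 := by simp
    _ ≤ ∑ i ∈ Finset.range n, d ^ i := Finset.sum_le_sum (fun i _ => Nat.one_le_pow i d hd)

lemma scaleExp_split (d m n : ℕ) (h : m ≤ n) :
    scaleExp d n = scaleExp d m + d ^ m * scaleExp d (n - m) := by
  obtain ⟨k, rfl⟩ := Nat.exists_eq_add_of_le h
  rw [Nat.add_sub_cancel_left]
  rw [scaleExp, scaleExp, scaleExp, Finset.sum_range_add, Finset.mul_sum]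
  congr 1
  exact Finset.sum_congr rfl (fun i _ => pow_add d m i)

lemma sum_card_le (m n : ℕ) (h : m ≤ n) :
    ∑ k ∈ Finset.range n, Nat.card (T.V k) ≤
      (∑ k ∈ Finset.range m, Nat.card (T.V k)) + Nat.card (T.V m) * scaleExp d (n - m) := by
  obtain ⟨k, rfl⟩ := Nat.exists_eq_add_of_le h
  rw [Nat.add_sub_cancel_left, Finset.sum_range_add]
  refine Nat.add_le_add_left ?_ _
  rw [scaleExp, Finset.mul_sum]
  exact Finset.sum_le_sum (fun i _ => cardV_le_pow T m i)

end ArborealAux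

end AuxProof

/-- **Non-complete trees have automorphism group of upper Minkowski dimension less
than `1`**: if `|L_m| < d^m` at some level `m ≥ 1` then
`dim_upper(Aut T) ≤ |L_m|/d^m < 1`. -/
theorem arboreal_noncomplete_small {d : ℕ} (hd : 2 ≤ d) (T : DaryTree d)
    (m : ℕ) (hm : 1 ≤ m) (hlt : Nat.card (T.V m) < d ^ m) :
    dimUpper d (T.aut : Set (∀ n, Equiv.Perm (T.V n))) ≤
        (Nat.card (T.V m) : ℝ) / (d : ℝ) ^ m ∧
      dimUpper d (T.aut : Set (∀ n, Equiv.Perm (T.V n))) < 1 := by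
  classical
  haveI := ArborealAux.Vfinite T
  set G : Set (∀ n, Equiv.Perm (T.V n)) := (T.aut : Set (∀ n, Equiv.Perm (T.V n))) with hG
  have hd1 : 1 ≤ d := by omega
  have hfac2 : (2 : ℕ) ≤ d.factorial := le_trans hd (Nat.self_le_factorial d)
  have hlogfac : 0 < Real.log (d.factorial : ℝ) := by
    apply Real.log_pos
    exact_mod_cast Nat.lt_of_lt_of_le one_lt_two hfac2
  have hdpos : (0:ℝ) < (d : ℝ) := by exact_mod_cast Nat.lt_of_lt_of_le Nat.zero_lt_two hd
  have hdm : (0:ℝ) < (d : ℝ) ^ m := by positivity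
  set c : ℝ := (Nat.card (T.V m) : ℝ) with hc
  have hc0 : 0 ≤ c := by positivity
  set A : ℝ := ((∑ k ∈ Finset.range m, Nat.card (T.V k) : ℕ) : ℝ) with hA
  have hA0 : 0 ≤ A := by positivity
  set f : ℕ → ℝ := fun n =>
    Real.log ((coverNum d G n : ℕ) : ℝ) / Real.log (1 / treeScale d n) with hf
  set g : ℕ → ℝ := fun n => c / (d:ℝ) ^ m + A / ((scaleExp d n : ℕ) : ℝ) with hg
  have hf0 : ∀ n, 0 ≤ f n := by
    intro n
    apply div_nonneg (Real.log_natCast_nonneg _)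
    rw [ArborealAux.log_one_div_treeScale]
    positivity
  have hkey : ∀ n, m ≤ n → f n ≤ g n := by
    intro n hn
    have hn1 : 1 ≤ n := le_trans hm hn
    have hEn : (1:ℝ) ≤ ((scaleExp d n : ℕ) : ℝ) := by
      exact_mod_cast ArborealAux.one_le_scaleExp d hd1 hn1
    have hEnpos : (0:ℝ) < ((scaleExp d n : ℕ) : ℝ) := lt_of_lt_of_le one_pos hEn
    set S : ℕ := ∑ k ∈ Finset.range n, Nat.card (T.V k) with hS
    have hcover : (coverNum d G n : ℕ) ≤ d.factorial ^ S :=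
      le_trans (ArborealAux.coverNum_le_levelCard d n G) (ArborealAux.card_restr_le T n)
    have hlogN : Real.log ((coverNum d G n : ℕ) : ℝ) ≤ (S : ℝ) * Real.log (d.factorial : ℝ) := by
      rcases Nat.eq_zero_or_pos (coverNum d G n) with h0 | hpos
      · rw [h0]
        simp only [Nat.cast_zero, Real.log_zero]
        positivity
      · calc Real.log ((coverNum d G n : ℕ) : ℝ) ≤ Real.log ((d.factorial : ℝ) ^ S) := by
              apply Real.log_le_log (by exact_mod_cast hpos)
              exact_mod_cast hcover
          _ = (S : ℝ) * Real.log (d.factorial : ℝ) := by rw [Real.log_pow]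
    have hfS : f n ≤ (S : ℝ) / ((scaleExp d n : ℕ) : ℝ) := by
      show Real.log ((coverNum d G n : ℕ) : ℝ) / Real.log (1 / treeScale d n) ≤ _
      rw [ArborealAux.log_one_div_treeScale]
      rw [div_le_div_iff₀ (by positivity) hEnpos]
      calc Real.log ((coverNum d G n : ℕ) : ℝ) * ((scaleExp d n : ℕ) : ℝ)
          ≤ ((S : ℝ) * Real.log (d.factorial : ℝ)) * ((scaleExp d n : ℕ) : ℝ) :=
            mul_le_mul_of_nonneg_right hlogN hEnpos.le
        _ = (S : ℝ) * (((scaleExp d n : ℕ) : ℝ) * Real.log (d.factorial : ℝ)) := by ring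
    refine hfS.trans ?_
    set E' : ℝ := ((scaleExp d (n - m) : ℕ) : ℝ) with hE'
    have hE'0 : 0 ≤ E' := by positivity
    have hSle : (S : ℝ) ≤ A + c * E' := by
      have h1 := ArborealAux.sum_card_le T m n hn
      rw [hS, hA, hc, hE']
      exact_mod_cast h1
    have hsplit : (d:ℝ) ^ m * E' ≤ ((scaleExp d n : ℕ) : ℝ) := by
      have h1 := ArborealAux.scaleExp_split d m n hn
      have h2 : d ^ m * scaleExp d (n - m) ≤ scaleExp d n := by omega
      rw [hE']
      exact_mod_cast h2
    have step1 : (S : ℝ) / ((scaleExp d n : ℕ) : ℝ) ≤ (A + c * E') / ((scaleExp d n : ℕ) : ℝ) := by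
      gcongr
    refine step1.trans ?_
    rw [add_div]
    have step2 : c * E' / ((scaleExp d n : ℕ) : ℝ) ≤ c / (d:ℝ) ^ m := by
      rw [div_le_div_iff₀ hEnpos hdm]
      calc c * E' * (d:ℝ) ^ m = c * ((d:ℝ) ^ m * E') := by ring
        _ ≤ c * ((scaleExp d n : ℕ) : ℝ) := mul_le_mul_of_nonneg_left hsplit hc0
    calc A / ((scaleExp d n : ℕ) : ℝ) + c * E' / ((scaleExp d n : ℕ) : ℝ)
        ≤ A / ((scaleExp d n : ℕ) : ℝ) + c / (d:ℝ) ^ m := by gcongr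
      _ = g n := by rw [hg]; ring
  -- tendsto of g
  have hE : Filter.Tendsto (fun n : ℕ => ((scaleExp d n : ℕ) : ℝ)) Filter.atTop Filter.atTop := by
    have hmono : ∀ n : ℕ, (n : ℝ) ≤ ((scaleExp d n : ℕ) : ℝ) := fun n => by
      exact_mod_cast ArborealAux.n_le_scaleExp d hd1 n
    exact Filter.tendsto_atTop_mono hmono tendsto_natCast_atTop_atTop
  have h30 : Filter.Tendsto (fun n : ℕ => A / ((scaleExp d n : ℕ) : ℝ)) Filter.atTop (nhds 0) :=
    Filter.Tendsto.div_atTop tendsto_const_nhds hE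
  have h3 : Filter.Tendsto g Filter.atTop (nhds (c / (d:ℝ) ^ m)) := by
    have := Filter.Tendsto.add (tendsto_const_nhds (x := c / (d:ℝ) ^ m)
      (f := Filter.atTop (α := ℕ))) h30
    simpa using this
  have hfg : f ≤ᶠ[Filter.atTop] g := Filter.eventually_atTop.mpr ⟨m, hkey⟩
  have hlimsup : Filter.limsup f Filter.atTop ≤ c / (d:ℝ) ^ m := by
    have h4 : Filter.limsup f Filter.atTop ≤ Filter.limsup g Filter.atTop :=
      Filter.limsup_le_limsup hfg
        (Filter.isCoboundedUnder_le_of_le Filter.atTop hf0)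
        h3.isBoundedUnder_le
    rw [h3.limsup_eq] at h4
    exact h4
  have hdim : dimUpper d G = Filter.limsup f Filter.atTop := rfl
  constructor
  · rw [hdim]
    exact hlimsup
  · rw [hdim]
    refine lt_of_le_of_lt hlimsup ?_
    rw [div_lt_one hdm, hc]
    exact_mod_cast hlt
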